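/- (Expected-squared-norm bounds for a Gaussian T-product tensor series.) Let A₁, …, Aₙ be fixed Hermitian block-circulant matrices in ℂ^{(mp)×(mp)} (block-circulant representations of Hermitian T-product tensors in ℂ^{m×m×p}), let α₁, …, αₙ be independent standard Gaussian random variables, set X := Σᵢ αᵢ Aᵢ and σ² := ‖Σᵢ Aᵢ²‖. Then σ² ≤ E[ ‖X‖² ] ≤ 4 m p σ². -/

import Mathlib

open MeasureTheory ProbabilityTheory Matrix
open scoped ComplexOrder

noncomputable section

/-- Entrywise measurable space on complex matrices. -/
instance matrixMeasurableSpace {m n : Type*} : MeasurableSpace (Matrix m n ℂ) :=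
  (inferInstance : MeasurableSpace (m → n → ℂ))

/-- `M` is block circulant: shifting both frontal indices by `d` leaves entries unchanged,
i.e. `M ((i,k),(j,l))` depends only on `i`, `j` and `(k - l) mod p`. -/
def IsBlockCirculant {m n p : ℕ} [NeZero p]
    (M : Matrix (Fin m × Fin p) (Fin n × Fin p) ℂ) : Prop :=
  ∀ (i : Fin m) (j : Fin n) (k l d : Fin p), M (i, k + d) (j, l + d) = M (i, k) (j, l)

/-- Spectral norm (largest singular value) of a complex matrix, as the operator norm of the
associated Euclidean linear map. -/
def specNorm {m n : Type*} [Fintype m] [Fintype n] [DecidableEq n] (A : Matrix m n ℂ) : ℝ :=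
  ‖LinearMap.toContinuousLinearMap (Matrix.toEuclideanLin A)‖

/-- Largest real eigenvalue of a square complex matrix. -/
def lambdaMax {n : Type*} [Fintype n] (A : Matrix n n ℂ) : ℝ :=
  sSup {r : ℝ | ∃ v : n → ℂ, v ≠ 0 ∧ A.mulVec v = (r : ℂ) • v}

/-- Smallest real eigenvalue of a square complex matrix. -/
def lambdaMin {n : Type*} [Fintype n] (A : Matrix n n ℂ) : ℝ :=
  sInf {r : ℝ | ∃ v : n → ℂ, v ≠ 0 ∧ A.mulVec v = (r : ℂ) • v}

/-- Entrywise expectation of a random matrix. -/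
def eMat {Ω : Type*} [MeasurableSpace Ω] (μ : Measure Ω) {m n : Type*}
    (X : Ω → Matrix m n ℂ) : Matrix m n ℂ :=
  Matrix.of fun i j => ∫ ω, X ω i j ∂μ

/-- `β` is a Rademacher random variable: it takes the values `1` and `-1`, each with
probability `1/2`. -/
def IsRademacher {Ω : Type*} [MeasurableSpace Ω] (μ : Measure Ω) (β : Ω → ℝ) : Prop :=
  Measurable β ∧ μ {ω | β ω = 1} = 1/2 ∧ μ {ω | β ω = -1} = 1/2

/-- `α` is a standard Gaussian random variable. -/
def IsStdGaussian {Ω : Type*} [MeasurableSpace Ω] (μ : Measure Ω) (α : Ω → ℝ) : Prop :=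
  Measurable α ∧ Measure.map α μ = gaussianReal 0 1

/-- Binary information divergence `D(c‖d)`. -/
def binKL (c d : ℝ) : ℝ :=
  c * Real.log (c / d) + (1 - c) * Real.log ((1 - c) / (1 - d))


section Aux
open Real
open scoped Matrix.Norms.L2Operator


-- integrability of x^2 * exp(-x^2/2) and x * exp(-x^2/2)
lemma int_exp : Integrable (fun x : ℝ => Real.exp (-(2:ℝ)⁻¹ * x ^ 2)) := by
  exact integrable_exp_neg_mul_sq (by norm_num)

lemma aux_bound (x : ℝ) : x ^ 2 ≤ 4 * Real.exp ((4:ℝ)⁻¹ * x ^ 2) := by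
  have h := Real.add_one_le_exp ((4:ℝ)⁻¹ * x ^ 2)
  nlinarith [sq_nonneg x, Real.exp_pos ((4:ℝ)⁻¹ * x ^ 2)]

lemma int_sq_exp : Integrable (fun x : ℝ => x ^ 2 * Real.exp (-(2:ℝ)⁻¹ * x ^ 2)) := by
  have h4 : Integrable (fun x : ℝ => 4 * Real.exp (-(4:ℝ)⁻¹ * x ^ 2)) :=
    (integrable_exp_neg_mul_sq (by norm_num)).const_mul 4
  refine h4.mono' ?_ ?_
  · exact (continuous_pow 2).aestronglyMeasurable.mul
      (Real.continuous_exp.comp (by continuity)).aestronglyMeasurable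
  · filter_upwards with x
    have h1 := aux_bound x
    have : x ^ 2 * Real.exp (-(2:ℝ)⁻¹ * x ^ 2) ≤ 4 * Real.exp (-(4:ℝ)⁻¹ * x ^ 2) := by
      have := Real.exp_pos (-(2:ℝ)⁻¹ * x ^ 2)
      calc x ^ 2 * Real.exp (-(2:ℝ)⁻¹ * x ^ 2)
          ≤ (4 * Real.exp ((4:ℝ)⁻¹ * x ^ 2)) * Real.exp (-(2:ℝ)⁻¹ * x ^ 2) := by
            exact mul_le_mul_of_nonneg_right h1 this.le
        _ = 4 * Real.exp (-(4:ℝ)⁻¹ * x ^ 2) := by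
            rw [mul_assoc, ← Real.exp_add]; ring_nf
    have hnn : 0 ≤ x ^ 2 * Real.exp (-(2:ℝ)⁻¹ * x ^ 2) :=
      mul_nonneg (sq_nonneg x) (Real.exp_pos _).le
    rwa [Real.norm_eq_abs, abs_of_nonneg hnn]

lemma int_abs_exp : Integrable (fun x : ℝ => x * Real.exp (-(2:ℝ)⁻¹ * x ^ 2)) := by
  have h : Integrable (fun x : ℝ => (1 + x ^ 2) * Real.exp (-(2:ℝ)⁻¹ * x ^ 2)) := by
    refine (int_exp.add int_sq_exp).congr (Filter.Eventually.of_forall fun x => ?_)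
    simp only [Pi.add_apply]; ring
  refine h.mono' ?_ ?_
  · exact (continuous_id.mul (Real.continuous_exp.comp (by continuity))).aestronglyMeasurable
  · filter_upwards with x
    have : |x| ≤ 1 + x ^ 2 := by nlinarith [abs_nonneg x, sq_abs x]
    have hepos := (Real.exp_pos (-(2:ℝ)⁻¹ * x ^ 2)).le
    rw [Real.norm_eq_abs, abs_mul, abs_of_nonneg hepos]
    have h2 : 0 ≤ (1 + x ^ 2) * Real.exp (-(2:ℝ)⁻¹ * x ^ 2) := by positivity
    calc |x| * Real.exp (-(2:ℝ)⁻¹ * x ^ 2) ≤ (1 + x ^ 2) * Real.exp (-(2:ℝ)⁻¹ * x ^ 2) :=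
      mul_le_mul_of_nonneg_right this hepos
    _ = (1 + x ^ 2) * Real.exp (-(2:ℝ)⁻¹ * x ^ 2) := rfl

-- ∫ x^2 exp(-x²/2) = √(2π) via integration by parts on ℝ
lemma integral_sq_exp : ∫ x : ℝ, x ^ 2 * Real.exp (-(2:ℝ)⁻¹ * x ^ 2) = Real.sqrt (2 * π) := by
  have hderiv : ∀ x : ℝ, HasDerivAt (fun y : ℝ => y * Real.exp (-(2:ℝ)⁻¹ * y ^ 2))
      (Real.exp (-(2:ℝ)⁻¹ * x ^ 2) - x ^ 2 * Real.exp (-(2:ℝ)⁻¹ * x ^ 2)) x := by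
    intro x
    have h1 : HasDerivAt (fun y : ℝ => -(2:ℝ)⁻¹ * y ^ 2) (-(2:ℝ)⁻¹ * (2 * x)) x := by
      simpa using ((hasDerivAt_pow 2 x).const_mul (-(2:ℝ)⁻¹))
    have h2 := (h1.exp)
    have h3 := (hasDerivAt_id x).mul h2
    refine HasDerivAt.congr_deriv h3 ?_
    simp only [id]
    ring
  have hzero := integral_eq_zero_of_hasDerivAt_of_integrable hderiv
    (int_exp.sub int_sq_exp) int_abs_exp
  have hgauss : ∫ x : ℝ, Real.exp (-(2:ℝ)⁻¹ * x ^ 2) = Real.sqrt (2 * π) := by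
    have := integral_gaussian (2:ℝ)⁻¹
    rw [this, div_inv_eq_mul, mul_comm]
  have hsplit : ∫ x : ℝ, (Real.exp (-(2:ℝ)⁻¹ * x ^ 2) - x ^ 2 * Real.exp (-(2:ℝ)⁻¹ * x ^ 2))
      = (∫ x : ℝ, Real.exp (-(2:ℝ)⁻¹ * x ^ 2)) - ∫ x : ℝ, x ^ 2 * Real.exp (-(2:ℝ)⁻¹ * x ^ 2) :=
    integral_sub int_exp int_sq_exp
  rw [hsplit] at hzero
  linarith [hzero, hgauss.symm ▸ hzero]

lemma gauss01_eq : gaussianReal 0 1 =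
    volume.withDensity (fun x => ((gaussianPDFReal 0 1 x).toNNReal : ENNReal)) := by
  rw [gaussianReal_of_var_ne_zero 0 one_ne_zero]
  rfl

lemma pdf01_eq (x : ℝ) : gaussianPDFReal 0 1 x = (Real.sqrt (2 * π))⁻¹ * Real.exp (-(2:ℝ)⁻¹ * x ^ 2) := by
  simp only [gaussianPDFReal, NNReal.coe_one, mul_one, sub_zero]
  congr 1
  ring

lemma integral_gauss01 (g : ℝ → ℝ) :
    ∫ x, g x ∂(gaussianReal 0 1) = ∫ x, gaussianPDFReal 0 1 x * g x := by
  rw [gauss01_eq, integral_withDensity_eq_integral_smul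
    ((show Measurable fun x => (gaussianPDFReal 0 1 x).toNNReal from measurable_real_toNNReal.comp (stronglyMeasurable_gaussianPDFReal 0 1).measurable))]
  congr 1; ext x
  rw [NNReal.smul_def, Real.coe_toNNReal _ (gaussianPDFReal_nonneg 0 1 x), smul_eq_mul]

lemma integrable_gauss01 (g : ℝ → ℝ) :
    Integrable g (gaussianReal 0 1) ↔ Integrable (fun x => gaussianPDFReal 0 1 x * g x) := by
  rw [gauss01_eq]
  refine (integrable_withDensity_iff_integrable_smul
    (f := fun x => (gaussianPDFReal 0 1 x).toNNReal)
    (measurable_real_toNNReal.comp (stronglyMeasurable_gaussianPDFReal 0 1).measurable)).trans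
    (integrable_congr (Filter.Eventually.of_forall fun x => ?_))
  show (gaussianPDFReal 0 1 x).toNNReal • g x = gaussianPDFReal 0 1 x * g x
  rw [NNReal.smul_def, Real.coe_toNNReal _ (gaussianPDFReal_nonneg 0 1 x), smul_eq_mul]

lemma integrable_id_gauss01 : Integrable (fun x : ℝ => x) (gaussianReal 0 1) := by
  rw [integrable_gauss01]
  refine (int_abs_exp.const_mul ((Real.sqrt (2 * π))⁻¹)).congr
    (Filter.Eventually.of_forall fun x => ?_)
  simp only [pdf01_eq]; ring

lemma integrable_sq_gauss01 : Integrable (fun x : ℝ => x ^ 2) (gaussianReal 0 1) := by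
  rw [integrable_gauss01]
  refine (int_sq_exp.const_mul ((Real.sqrt (2 * π))⁻¹)).congr
    (Filter.Eventually.of_forall fun x => ?_)
  simp only [pdf01_eq]; ring

lemma integral_id_gauss01 : ∫ x, x ∂(gaussianReal 0 1) = 0 := by
  rw [integral_gauss01]
  have hodd : ∀ x : ℝ, gaussianPDFReal 0 1 (-x) * (-x) = -(gaussianPDFReal 0 1 x * x) := by
    intro x; rw [pdf01_eq, pdf01_eq]; ring_nf
  have h := MeasureTheory.integral_neg_eq_self (fun x => gaussianPDFReal 0 1 x * x) volume
  simp only [hodd, integral_neg] at h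
  linarith

lemma integral_sq_gauss01 : ∫ x, x ^ 2 ∂(gaussianReal 0 1) = 1 := by
  rw [integral_gauss01]
  have : ∀ x : ℝ, gaussianPDFReal 0 1 x * x ^ 2
      = (Real.sqrt (2 * π))⁻¹ * (x ^ 2 * Real.exp (-(2:ℝ)⁻¹ * x ^ 2)) := by
    intro x; rw [pdf01_eq]; ring
  simp only [this]
  rw [MeasureTheory.integral_const_mul, integral_sq_exp]
  rw [inv_mul_cancel₀]
  positivity


variable {Ω : Type*} [MeasurableSpace Ω] {μ : Measure Ω} {α β : Ω → ℝ}

lemma stdG_integrable (h : IsStdGaussian μ α) : Integrable α μ := by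
  have := (integrable_map_measure (f := α) (g := fun x : ℝ => x)
    (by rw [h.2]; exact integrable_id_gauss01.aestronglyMeasurable) h.1.aemeasurable).mp
  rw [h.2] at this
  exact this integrable_id_gauss01

lemma stdG_sq_integrable (h : IsStdGaussian μ α) : Integrable (fun ω => α ω * α ω) μ := by
  have := (integrable_map_measure (f := α) (g := fun x : ℝ => x * x)
    (by rw [h.2]; exact (by simpa [sq] using integrable_sq_gauss01 : Integrable (fun x : ℝ => x * x) (gaussianReal 0 1)).aestronglyMeasurable) h.1.aemeasurable).mp
  rw [h.2] at this
  exact this (by simpa [sq] using integrable_sq_gauss01)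

lemma stdG_mean (h : IsStdGaussian μ α) : ∫ ω, α ω ∂μ = 0 := by
  have := integral_map (φ := α) (f := fun x : ℝ => x) h.1.aemeasurable
    (by rw [h.2]; exact integrable_id_gauss01.aestronglyMeasurable)
  rw [h.2, integral_id_gauss01] at this
  exact this.symm

lemma stdG_sq_mean (h : IsStdGaussian μ α) : ∫ ω, α ω * α ω ∂μ = 1 := by
  have := integral_map (φ := α) (f := fun x : ℝ => x * x) h.1.aemeasurable
    (by rw [h.2]; exact (by simpa [sq] using integrable_sq_gauss01 : Integrable (fun x : ℝ => x * x) (gaussianReal 0 1)).aestronglyMeasurable)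
  rw [h.2] at this
  rw [← this]
  simpa [sq] using integral_sq_gauss01

lemma stdG_prod_integrable (ha : IsStdGaussian μ α) (hb : IsStdGaussian μ β)
    (hab : IndepFun α β μ) : Integrable (fun ω => α ω * β ω) μ :=
  hab.integrable_mul (stdG_integrable ha) (stdG_integrable hb)

lemma stdG_prod_mean (ha : IsStdGaussian μ α) (hb : IsStdGaussian μ β)
    (hab : IndepFun α β μ) : ∫ ω, α ω * β ω ∂μ = 0 := by
  have := hab.integral_mul_eq_mul_integral (stdG_integrable ha).aestronglyMeasurable
    (stdG_integrable hb).aestronglyMeasurable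
  simp only [Pi.mul_apply] at this
  rw [this, stdG_mean ha, zero_mul]

section MatrixAux



variable {N : Type*} [Fintype N] [DecidableEq N]

lemma specNorm_eq_l2 (A : Matrix N N ℂ) : specNorm A = ‖A‖ := rfl

lemma specNorm_nonneg (A : Matrix N N ℂ) : 0 ≤ specNorm A := norm_nonneg _

lemma specNorm_mul_self (A : Matrix N N ℂ) (hA : A.IsHermitian) :
    specNorm (A * A) = specNorm A ^ 2 := by
  have h := Matrix.l2_opNorm_conjTranspose_mul_self A
  rw [hA] at h
  rw [specNorm_eq_l2, specNorm_eq_l2, sq, h]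

lemma euclid_coord_le (v : EuclideanSpace ℂ N) (q : N) : ‖v q‖ ≤ ‖v‖ := by
  rw [EuclideanSpace.norm_eq]
  have h1 : ‖v q‖ ^ 2 ≤ ∑ i, ‖v i‖ ^ 2 :=
    Finset.single_le_sum (fun i _ => sq_nonneg ‖v i‖) (Finset.mem_univ q)
  calc ‖v q‖ = Real.sqrt (‖v q‖ ^ 2) := (Real.sqrt_sq (norm_nonneg _)).symm
    _ ≤ Real.sqrt (∑ i, ‖v i‖ ^ 2) := Real.sqrt_le_sqrt h1

lemma specNorm_entry_le (A : Matrix N N ℂ) (q r : N) : ‖A q r‖ ≤ specNorm A := by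
  have h := Matrix.l2_opNorm_mulVec A (EuclideanSpace.single r (1:ℂ))
  rw [EuclideanSpace.norm_single, norm_one, mul_one] at h
  rw [specNorm_eq_l2]
  refine le_trans ?_ h
  have hentry : ((EuclideanSpace.equiv N ℂ).symm <| A *ᵥ (EuclideanSpace.single r (1:ℂ))) q
      = A q r := by
    show (A *ᵥ (EuclideanSpace.single r (1:ℂ))) q = A q r
    simp [Matrix.mulVec, dotProduct, EuclideanSpace.single_apply]
  calc ‖A q r‖ = ‖((EuclideanSpace.equiv N ℂ).symm <| A *ᵥ (EuclideanSpace.single r (1:ℂ))) q‖ := by rw [hentry]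
    _ ≤ _ := euclid_coord_le _ q

lemma euclid_norm_sq (v : EuclideanSpace ℂ N) : ‖v‖ ^ 2 = ∑ i, ‖v i‖ ^ 2 := by
  rw [EuclideanSpace.norm_eq, Real.sq_sqrt]
  exact Finset.sum_nonneg fun i _ => sq_nonneg _

lemma toEuclideanLin_coord (A : Matrix N N ℂ) (v : EuclideanSpace ℂ N) (q : N) :
    (Matrix.toEuclideanLin A v) q = ∑ r, A q r * v r := rfl

lemma specNorm_sq_le_frob (A : Matrix N N ℂ) :
    specNorm A ^ 2 ≤ ∑ q, ∑ r, ‖A q r‖ ^ 2 := by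
  set S := ∑ q, ∑ r, ‖A q r‖ ^ 2 with hS
  have hS0 : 0 ≤ S := Finset.sum_nonneg fun q _ => Finset.sum_nonneg fun r _ => sq_nonneg _
  have hb : specNorm A ≤ Real.sqrt S := by
    refine ContinuousLinearMap.opNorm_le_bound _ (Real.sqrt_nonneg S) fun v => ?_
    have hv : ‖LinearMap.toContinuousLinearMap (Matrix.toEuclideanLin A) v‖ ^ 2 ≤ S * ‖v‖ ^ 2 := by
      have h1 : ‖LinearMap.toContinuousLinearMap (Matrix.toEuclideanLin A) v‖ ^ 2
          = ∑ q, ‖∑ r, A q r * v r‖ ^ 2 := by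
        rw [show (LinearMap.toContinuousLinearMap (Matrix.toEuclideanLin A) v : EuclideanSpace ℂ N)
          = Matrix.toEuclideanLin A v from rfl, euclid_norm_sq]
        exact Finset.sum_congr rfl fun q _ => by rw [toEuclideanLin_coord]
      rw [h1, euclid_norm_sq]
      calc ∑ q, ‖∑ r, A q r * v r‖ ^ 2
          ≤ ∑ q, (∑ r, ‖A q r‖ ^ 2) * (∑ r, ‖v r‖ ^ 2) := by
            refine Finset.sum_le_sum fun q _ => ?_
            have h2 : ‖∑ r, A q r * v r‖ ≤ ∑ r, ‖A q r‖ * ‖v r‖ := by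
              refine le_trans (norm_sum_le _ _) (Finset.sum_le_sum fun r _ => ?_)
              rw [norm_mul]
            have h3 : (∑ r, ‖A q r‖ * ‖v r‖) ^ 2 ≤ (∑ r, ‖A q r‖ ^ 2) * (∑ r, ‖v r‖ ^ 2) :=
              Finset.sum_mul_sq_le_sq_mul_sq _ _ _
            calc ‖∑ r, A q r * v r‖ ^ 2 ≤ (∑ r, ‖A q r‖ * ‖v r‖) ^ 2 := by
                  refine pow_le_pow_left₀ (norm_nonneg _) h2 2
              _ ≤ _ := h3
        _ = S * (∑ r, ‖v r‖ ^ 2) := by rw [← Finset.sum_mul]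
    have h4 : ‖LinearMap.toContinuousLinearMap (Matrix.toEuclideanLin A) v‖
        = Real.sqrt (‖LinearMap.toContinuousLinearMap (Matrix.toEuclideanLin A) v‖ ^ 2) :=
      (Real.sqrt_sq (norm_nonneg _)).symm
    rw [h4]
    calc Real.sqrt (‖LinearMap.toContinuousLinearMap (Matrix.toEuclideanLin A) v‖ ^ 2)
        ≤ Real.sqrt (S * ‖v‖ ^ 2) := Real.sqrt_le_sqrt hv
      _ = Real.sqrt S * ‖v‖ := by
          rw [Real.sqrt_mul hS0, Real.sqrt_sq (norm_nonneg v)]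
  calc specNorm A ^ 2 ≤ Real.sqrt S ^ 2 := pow_le_pow_left₀ (specNorm_nonneg A) hb 2
    _ = S := Real.sq_sqrt hS0

lemma specNorm_integral_le {Ω : Type*} [MeasurableSpace Ω] (μ : Measure Ω)
    (Y : Ω → Matrix N N ℂ) (hent : ∀ q r, Integrable (fun ω => Y ω q r) μ)
    (g : Ω → ℝ) (hg : Integrable g μ) (hgnn : ∀ ω, 0 ≤ g ω)
    (hle : ∀ ω, specNorm (Y ω) ≤ g ω) :
    specNorm (Matrix.of fun q r => ∫ ω, Y ω q r ∂μ) ≤ ∫ ω, g ω ∂μ := by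
  set B : Matrix N N ℂ := Matrix.of fun q r => ∫ ω, Y ω q r ∂μ with hB
  have hgint : 0 ≤ ∫ ω, g ω ∂μ := integral_nonneg hgnn
  refine ContinuousLinearMap.opNorm_le_bound _ hgint fun v => ?_
  set U : EuclideanSpace ℂ N := Matrix.toEuclideanLin B v with hU
  have hUv : ∀ q, U q = ∑ r, B q r * v r := fun q => rfl
  -- U q = ∫ ω, (Y ω *ᵥ v) q
  have hint1 : ∀ q r, Integrable (fun ω => Y ω q r * v r) μ := fun q r =>
    (hent q r).mul_const _
  have hUq : ∀ q, U q = ∫ ω, ∑ r, Y ω q r * v r ∂μ := by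
    intro q
    rw [hUv q, integral_finset_sum _ fun r _ => hint1 q r]
    refine Finset.sum_congr rfl fun r _ => ?_
    rw [hB]
    show (∫ ω, Y ω q r ∂μ) * v r = _
    rw [← integral_mul_const]
  -- the EuclideanSpace vector Y ω *ᵥ v
  set W : Ω → EuclideanSpace ℂ N := fun ω =>
    (EuclideanSpace.equiv N ℂ).symm (Y ω *ᵥ (WithLp.equiv 2 (N → ℂ)) v) with hW
  have hWq : ∀ ω q, W ω q = ∑ r, Y ω q r * v r := fun ω q => rfl
  have hWnorm : ∀ ω, ‖W ω‖ ≤ g ω * ‖v‖ := by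
    intro ω
    have := Matrix.l2_opNorm_mulVec (Y ω) v
    calc ‖W ω‖ ≤ ‖Y ω‖ * ‖v‖ := this
      _ ≤ g ω * ‖v‖ := by
        refine mul_le_mul_of_nonneg_right ?_ (norm_nonneg v)
        rw [← specNorm_eq_l2]; exact hle ω
  -- inner product computation
  have hinner : ∀ ω, (inner ℂ U (W ω) : ℂ) = ∑ q, (starRingEnd ℂ) (U q) * W ω q := by
    intro ω
    rw [PiLp.inner_apply]
    simp only [RCLike.inner_apply, mul_comm]
  have hintW : ∀ q, Integrable (fun ω => (starRingEnd ℂ) (U q) * W ω q) μ := by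
    intro q
    have : Integrable (fun ω => ∑ r, Y ω q r * v r) μ :=
      integrable_finset_sum _ fun r _ => hint1 q r
    exact (this.congr (Filter.Eventually.of_forall fun ω => (hWq ω q).symm)).const_mul _
  have hintInner : Integrable (fun ω => (inner ℂ U (W ω) : ℂ)) μ := by
    refine (integrable_finset_sum _ fun q _ => hintW q).congr
      (Filter.Eventually.of_forall fun ω => (hinner ω).symm)
  have hnormUsq : (‖U‖ : ℝ) ^ 2 = (inner ℂ U U : ℂ).re := by
    rw [← inner_self_eq_norm_sq (𝕜 := ℂ) U]
    simp [RCLike.re_to_complex]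
  have hUW : (inner ℂ U U : ℂ) = ∫ ω, (inner ℂ U (W ω) : ℂ) ∂μ := by
    rw [integral_congr_ae (Filter.Eventually.of_forall hinner),
      integral_finset_sum _ fun q _ => hintW q]
    rw [PiLp.inner_apply]
    refine Finset.sum_congr rfl fun q _ => ?_
    rw [integral_const_mul]
    have : U q = ∫ ω, W ω q ∂μ := by
      rw [hUq q]
      exact integral_congr_ae (Filter.Eventually.of_forall fun ω => (hWq ω q).symm)
    rw [RCLike.inner_apply, mul_comm]
    show (starRingEnd ℂ) (U q) * U q = (starRingEnd ℂ) (U q) * ∫ ω, W ω q ∂μ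
    rw [← this]
  have key : ‖U‖ ^ 2 ≤ ‖U‖ * ((∫ ω, g ω ∂μ) * ‖v‖) := by
    have hre := integral_re hintInner
    simp only [RCLike.re_to_complex] at hre
    rw [hnormUsq, hUW, ← hre]
    have hmono : ∫ ω, (inner ℂ U (W ω) : ℂ).re ∂μ ≤ ∫ ω, ‖U‖ * (g ω * ‖v‖) ∂μ := by
      refine integral_mono hintInner.re ((hg.mul_const _).const_mul _) fun ω => ?_
      calc (inner ℂ U (W ω) : ℂ).re ≤ ‖(inner ℂ U (W ω) : ℂ)‖ := Complex.re_le_norm _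
        _ ≤ ‖U‖ * ‖W ω‖ := norm_inner_le_norm _ _
        _ ≤ ‖U‖ * (g ω * ‖v‖) := mul_le_mul_of_nonneg_left (hWnorm ω) (norm_nonneg U)
    calc ∫ ω, (inner ℂ U (W ω) : ℂ).re ∂μ ≤ ∫ ω, ‖U‖ * (g ω * ‖v‖) ∂μ := hmono
      _ = ‖U‖ * ((∫ ω, g ω ∂μ) * ‖v‖) := by
        rw [integral_const_mul, integral_mul_const]
  have hfinal : ‖U‖ ≤ (∫ ω, g ω ∂μ) * ‖v‖ := by
    rcases eq_or_lt_of_le (norm_nonneg U) with h0 | h0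
    · rw [← h0]; exact mul_nonneg hgint (norm_nonneg v)
    · have := key
      rw [sq] at this
      exact le_of_mul_le_mul_left this h0
  exact hfinal

end MatrixAux

lemma conj_mul_self_re (z : ℂ) : ((starRingEnd ℂ) z * z).re = ‖z‖ ^ 2 := by
  rw [mul_comm, RCLike.mul_conj]
  simp [← Complex.ofReal_pow]

lemma norm_sq_sum_expand {n : ℕ} (t : Fin n → ℝ) (c : Fin n → ℂ) :
    ‖∑ k, (t k : ℂ) * c k‖ ^ 2
      = ∑ k, ∑ l, (t k * t l) * ((starRingEnd ℂ) (c k) * c l).re := by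
  rw [← conj_mul_self_re, map_sum, Finset.sum_mul_sum, Complex.re_sum]
  refine Finset.sum_congr rfl fun k _ => ?_
  rw [Complex.re_sum]
  refine Finset.sum_congr rfl fun l _ => ?_
  rw [show (starRingEnd ℂ) ((t k : ℂ) * c k) * ((t l : ℂ) * c l)
      = ((t k * t l : ℝ) : ℂ) * ((starRingEnd ℂ) (c k) * c l) by
    simp only [_root_.map_mul, Complex.conj_ofReal, Complex.ofReal_mul]; ring]
  simp [Complex.mul_re]

end Aux

/-- Expected-squared-norm bounds for a Gaussian T-product tensor series:
`σ² ≤ E[‖X‖²] ≤ 4 m p σ²`, where `X = Σᵢ αᵢ Aᵢ` and `σ² = ‖Σᵢ Aᵢ²‖`. -/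
theorem gaussian_series_expected_sq_norm {m p : ℕ} [NeZero p] {Ω : Type*}
    [MeasurableSpace Ω] (μ : Measure Ω) [IsProbabilityMeasure μ] {n : ℕ}
    (A : Fin n → Matrix (Fin m × Fin p) (Fin m × Fin p) ℂ)
    (hAherm : ∀ i, (A i).IsHermitian) (hAcirc : ∀ i, IsBlockCirculant (A i))
    (α : Fin n → Ω → ℝ) (hα : ∀ i, IsStdGaussian μ (α i))
    (hind : iIndepFun α μ)
    (σ2 : ℝ) (hσ2 : σ2 = specNorm (∑ i, A i ^ 2)) :
    σ2 ≤ ∫ ω, specNorm (∑ i, ((α i ω : ℝ) : ℂ) • A i) ^ 2 ∂μ ∧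
      ∫ ω, specNorm (∑ i, ((α i ω : ℝ) : ℂ) • A i) ^ 2 ∂μ ≤ 4 * m * p * σ2 := by
  classical
  have hmomI : ∀ k l : Fin n, Integrable (fun ω => α k ω * α l ω) μ := by
    intro k l
    rcases eq_or_ne k l with rfl | hkl
    · exact stdG_sq_integrable (hα k)
    · exact stdG_prod_integrable (hα k) (hα l) (hind.indepFun hkl)
  have hmomV : ∀ k l : Fin n, ∫ ω, α k ω * α l ω ∂μ = if k = l then 1 else 0 := by
    intro k l
    rcases eq_or_ne k l with rfl | hkl
    · simp [stdG_sq_mean (hα k)]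
    · simp [hkl, stdG_prod_mean (hα k) (hα l) (hind.indepFun hkl)]
  let X : Ω → Matrix (Fin m × Fin p) (Fin m × Fin p) ℂ :=
    fun ω => ∑ i, ((α i ω : ℝ) : ℂ) • A i
  have hX : X = fun ω => ∑ i, ((α i ω : ℝ) : ℂ) • A i := rfl
  show σ2 ≤ ∫ ω, specNorm (X ω) ^ 2 ∂μ ∧ ∫ ω, specNorm (X ω) ^ 2 ∂μ ≤ 4 * m * p * σ2
  have hCi : ∀ (f : Ω → ℝ) (c : ℂ), Integrable f μ → Integrable (fun ω => (f ω : ℂ) * c) μ := by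
    intro f c hf
    refine (hf.smul_const c).congr (Filter.Eventually.of_forall fun ω => ?_)
    show f ω • c = (f ω : ℂ) * c
    rw [Complex.real_smul]
  have hCv : ∀ (f : Ω → ℝ) (c : ℂ), Integrable f μ →
      ∫ ω, (f ω : ℂ) * c ∂μ = ((∫ ω, f ω ∂μ : ℝ) : ℂ) * c := by
    intro f c hf
    rw [← Complex.real_smul, ← integral_smul_const]
    exact integral_congr_ae (Filter.Eventually.of_forall fun ω => Complex.real_smul.symm)
  have hXentry : ∀ ω q r, X ω q r = ∑ k, ((α k ω : ℝ) : ℂ) * A k q r := by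
    intro ω q r
    rw [hX]
    simp [Matrix.sum_apply]
  have hXherm : ∀ ω, (X ω).IsHermitian := by
    intro ω
    show (X ω)ᴴ = X ω
    rw [hX]
    simp only
    rw [Matrix.conjTranspose_sum]
    refine Finset.sum_congr rfl fun k _ => ?_
    rw [Matrix.conjTranspose_smul, hAherm k, Complex.star_def, Complex.conj_ofReal]
  have hXXentry : ∀ ω q r, (X ω * X ω) q r
      = ∑ k, ∑ l, ((α k ω * α l ω : ℝ) : ℂ) * ((A k * A l) q r) := by
    intro ω q r
    have hexp : X ω * X ω = ∑ k, ∑ l, ((α k ω * α l ω : ℝ) : ℂ) • (A k * A l) := by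
      rw [hX]
      simp only
      rw [Finset.sum_mul_sum]
      refine Finset.sum_congr rfl fun k _ => Finset.sum_congr rfl fun l _ => ?_
      rw [smul_mul_smul_comm, Complex.ofReal_mul]
    rw [hexp]
    simp [Matrix.sum_apply]
  have hF1int : ∀ q r, Integrable (fun ω => (X ω * X ω) q r) μ := by
    intro q r
    exact (integrable_finset_sum _ fun k _ => integrable_finset_sum _ fun l _ =>
      hCi _ _ (hmomI k l)).congr (Filter.Eventually.of_forall fun ω => (hXXentry ω q r).symm)
  have hF1val : ∀ q r, ∫ ω, (X ω * X ω) q r ∂μ = (∑ k, A k ^ 2) q r := by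
    intro q r
    rw [integral_congr_ae (Filter.Eventually.of_forall fun ω => hXXentry ω q r)]
    rw [integral_finset_sum _ fun k _ => integrable_finset_sum _ fun l _ => hCi _ _ (hmomI k l)]
    have hk : ∀ k : Fin n, ∫ ω, ∑ l, ((α k ω * α l ω : ℝ) : ℂ) * ((A k * A l) q r) ∂μ
        = ∑ l, ((∫ ω, α k ω * α l ω ∂μ : ℝ) : ℂ) * ((A k * A l) q r) := by
      intro k
      rw [integral_finset_sum _ fun l _ => hCi _ _ (hmomI k l)]
      exact Finset.sum_congr rfl fun l _ => hCv _ _ (hmomI k l)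
    simp_rw [hk, hmomV]
    rw [Matrix.sum_apply]
    refine Finset.sum_congr rfl fun k _ => ?_
    rw [Finset.sum_eq_single k]
    · simp [pow_two]
    · intro l _ hlk
      have hne : ¬ k = l := fun h => hlk h.symm
      simp [hne]
    · intro h; exact absurd (Finset.mem_univ k) h
  have hfrobPt : ∀ ω, (∑ q, ∑ r, ‖X ω q r‖ ^ 2)
      = ∑ q, ∑ r, ∑ k, ∑ l, (α k ω * α l ω) * ((starRingEnd ℂ) (A k q r) * A l q r).re := by
    intro ω
    refine Finset.sum_congr rfl fun q _ => Finset.sum_congr rfl fun r _ => ?_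
    rw [hXentry ω q r, norm_sq_sum_expand]
  have hfrobInt : Integrable (fun ω => ∑ q, ∑ r, ‖X ω q r‖ ^ 2) μ := by
    exact (integrable_finset_sum _ fun q _ => integrable_finset_sum _ fun r _ =>
      integrable_finset_sum _ fun k _ => integrable_finset_sum _ fun l _ =>
      (hmomI k l).mul_const _).congr (Filter.Eventually.of_forall fun ω => (hfrobPt ω).symm)
  have hfrobVal : ∫ ω, ∑ q, ∑ r, ‖X ω q r‖ ^ 2 ∂μ = ∑ k, ∑ q, ∑ r, ‖A k q r‖ ^ 2 := by
    rw [integral_congr_ae (Filter.Eventually.of_forall hfrobPt)]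
    rw [integral_finset_sum _ fun q _ => integrable_finset_sum _ fun r _ =>
      integrable_finset_sum _ fun k _ => integrable_finset_sum _ fun l _ =>
      (hmomI k l).mul_const _]
    have hqr : ∀ q r, ∫ ω, ∑ k, ∑ l, (α k ω * α l ω) * ((starRingEnd ℂ) (A k q r) * A l q r).re ∂μ
        = ∑ k, ‖A k q r‖ ^ 2 := by
      intro q r
      rw [integral_finset_sum _ fun k _ => integrable_finset_sum _ fun l _ =>
        (hmomI k l).mul_const _]
      refine Finset.sum_congr rfl fun k _ => ?_
      rw [integral_finset_sum _ fun l _ => (hmomI k l).mul_const _]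
      have hl : ∀ l : Fin n, ∫ ω, (α k ω * α l ω) * ((starRingEnd ℂ) (A k q r) * A l q r).re ∂μ
          = (if k = l then (1:ℝ) else 0) * ((starRingEnd ℂ) (A k q r) * A l q r).re := by
        intro l
        rw [integral_mul_const, hmomV]
      simp_rw [hl]
      rw [Finset.sum_eq_single k]
      · rw [if_pos rfl, one_mul, conj_mul_self_re]
      · intro l _ hlk
        have hne : ¬ k = l := fun h => hlk h.symm
        simp [hne]
      · intro h; exact absurd (Finset.mem_univ k) h
    have hsimp : ∑ q : Fin m × Fin p, ∑ r : Fin m × Fin p,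
        (∫ ω, ∑ k, ∑ l, (α k ω * α l ω) * ((starRingEnd ℂ) (A k q r) * A l q r).re ∂μ)
        = ∑ q : Fin m × Fin p, ∑ r : Fin m × Fin p, ∑ k, ‖A k q r‖ ^ 2 := by
      refine Finset.sum_congr rfl fun q _ => ?_
      refine Finset.sum_congr rfl fun r _ => hqr q r
    calc ∑ q : Fin m × Fin p, ∫ ω, ∑ r : Fin m × Fin p, ∑ k, ∑ l,
          (α k ω * α l ω) * ((starRingEnd ℂ) (A k q r) * A l q r).re ∂μ
        = ∑ q : Fin m × Fin p, ∑ r : Fin m × Fin p,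
          ∫ ω, ∑ k, ∑ l, (α k ω * α l ω) * ((starRingEnd ℂ) (A k q r) * A l q r).re ∂μ := by
          refine Finset.sum_congr rfl fun q _ => ?_
          rw [integral_finset_sum _ fun r _ => integrable_finset_sum _ fun k _ =>
            integrable_finset_sum _ fun l _ => (hmomI k l).mul_const _]
      _ = ∑ q : Fin m × Fin p, ∑ r : Fin m × Fin p, ∑ k, ‖A k q r‖ ^ 2 := hsimp
      _ = ∑ q : Fin m × Fin p, ∑ k, ∑ r : Fin m × Fin p, ‖A k q r‖ ^ 2 :=
          Finset.sum_congr rfl fun q _ => Finset.sum_comm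
      _ = ∑ k, ∑ q : Fin m × Fin p, ∑ r : Fin m × Fin p, ‖A k q r‖ ^ 2 := Finset.sum_comm
  have htr : ∑ k, ∑ q : Fin m × Fin p, ∑ r : Fin m × Fin p, ‖A k q r‖ ^ 2
      ≤ (m * p : ℝ) * σ2 := by
    have h1 : ∀ (k : Fin n) (q : Fin m × Fin p), ∑ r : Fin m × Fin p, ‖A k q r‖ ^ 2
        = ((A k ^ 2) q q).re := by
      intro k q
      rw [pow_two, Matrix.mul_apply, Complex.re_sum]
      refine Finset.sum_congr rfl fun r _ => ?_
      have hsym : A k r q = (starRingEnd ℂ) (A k q r) := by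
        conv_lhs => rw [← hAherm k]
        rfl
      rw [hsym, mul_comm]
      exact (conj_mul_self_re _).symm
    have h3 : ∀ q : Fin m × Fin p, ((∑ k, A k ^ 2) q q).re ≤ σ2 := by
      intro q
      calc ((∑ k, A k ^ 2) q q).re ≤ ‖(∑ k, A k ^ 2) q q‖ := Complex.re_le_norm _
        _ ≤ specNorm (∑ k, A k ^ 2) := specNorm_entry_le _ q q
        _ = σ2 := hσ2.symm
    calc ∑ k, ∑ q : Fin m × Fin p, ∑ r : Fin m × Fin p, ‖A k q r‖ ^ 2
        = ∑ k, ∑ q : Fin m × Fin p, ((A k ^ 2) q q).re := by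
          exact Finset.sum_congr rfl fun k _ => Finset.sum_congr rfl fun q _ => h1 k q
      _ = ∑ q : Fin m × Fin p, ∑ k, ((A k ^ 2) q q).re := Finset.sum_comm
      _ = ∑ q : Fin m × Fin p, ((∑ k, A k ^ 2) q q).re := by
          refine Finset.sum_congr rfl fun q _ => ?_
          rw [Matrix.sum_apply, Complex.re_sum]
      _ ≤ ∑ _q : Fin m × Fin p, σ2 := Finset.sum_le_sum fun q _ => h3 q
      _ = (m * p : ℝ) * σ2 := by
          rw [Finset.sum_const, Finset.card_univ, Fintype.card_prod, Fintype.card_fin,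
            Fintype.card_fin, nsmul_eq_mul]
          push_cast
          ring
  have hcont : Continuous fun t : Fin n → ℝ =>
      specNorm (∑ k, ((t k : ℝ) : ℂ) • A k) := by
    have hlin := LinearMap.continuous_of_finiteDimensional
      ((Matrix.toEuclideanLin (𝕜 := ℂ) (m := Fin m × Fin p) (n := Fin m × Fin p)).trans
        LinearMap.toContinuousLinearMap).toLinearMap
    have h2 : Continuous fun M : Matrix (Fin m × Fin p) (Fin m × Fin p) ℂ => specNorm M :=
      continuous_norm.comp hlin
    have h1 : Continuous fun t : Fin n → ℝ =>
        (∑ k, ((t k : ℝ) : ℂ) • A k : Matrix (Fin m × Fin p) (Fin m × Fin p) ℂ) :=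
      continuous_finset_sum _ fun k _ =>
        (Complex.continuous_ofReal.comp (continuous_apply k)).smul continuous_const
    exact h2.comp h1
  have hmeasX : Measurable fun ω => specNorm (X ω) := by
    have hm : Measurable fun ω => (fun k => α k ω) := measurable_pi_lambda _ fun k => (hα k).1
    exact (hcont.measurable).comp hm
  have hspecint : Integrable (fun ω => specNorm (X ω) ^ 2) μ := by
    refine hfrobInt.mono' ((hmeasX.pow_const 2).aestronglyMeasurable)
      (Filter.Eventually.of_forall fun ω => ?_)
    rw [Real.norm_eq_abs, abs_of_nonneg (pow_nonneg (specNorm_nonneg _) 2)]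
    exact specNorm_sq_le_frob (X ω)
  have hσ2nn : 0 ≤ σ2 := hσ2 ▸ specNorm_nonneg _
  constructor
  · have hBeq : (∑ k, A k ^ 2) = Matrix.of fun q r => ∫ ω, (X ω * X ω) q r ∂μ := by
      ext q r
      exact (hF1val q r).symm
    have hle := specNorm_integral_le μ (fun ω => X ω * X ω) hF1int
      (fun ω => specNorm (X ω) ^ 2) hspecint (fun ω => sq_nonneg _)
      (fun ω => le_of_eq (specNorm_mul_self (X ω) (hXherm ω)))
    calc σ2 = specNorm (∑ k, A k ^ 2) := hσ2
      _ = specNorm (Matrix.of fun q r => ∫ ω, (X ω * X ω) q r ∂μ) := by rw [← hBeq]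
      _ ≤ ∫ ω, specNorm (X ω) ^ 2 ∂μ := hle
  · have h1 : ∫ ω, specNorm (X ω) ^ 2 ∂μ ≤ ∫ ω, ∑ q, ∑ r, ‖X ω q r‖ ^ 2 ∂μ :=
      integral_mono_of_nonneg (Filter.Eventually.of_forall fun ω => sq_nonneg _) hfrobInt
        (Filter.Eventually.of_forall fun ω => specNorm_sq_le_frob (X ω))
    have hmp : (0:ℝ) ≤ (m : ℝ) * p := by positivity
    calc ∫ ω, specNorm (X ω) ^ 2 ∂μ ≤ ∫ ω, ∑ q, ∑ r, ‖X ω q r‖ ^ 2 ∂μ := h1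
      _ = ∑ k, ∑ q : Fin m × Fin p, ∑ r : Fin m × Fin p, ‖A k q r‖ ^ 2 := hfrobVal
      _ ≤ (m * p : ℝ) * σ2 := htr
      _ ≤ 4 * m * p * σ2 := by nlinarith [hσ2nn, hmp]
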